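/- arXiv:2007.00935 — 3 statements merged into one kernel-verified Lean document; each statement's English description precedes it below -/
import Mathlib

section
/- (Stinespring representation theorem) A linear map Φ : M_p → M_q is completely positive if and only if there exist m ∈ ℕ and A ∈ M_{qm×p} such that Φ(X) = tr_m(A X A^T) for all X ∈ M_p. -/
open Matrix

/-- The partial trace `tr_m` from `M_q(M_m)` to `M_q`, taking blockwise traces. -/
noncomputable def partialTrace (q m : ℕ) (M : Matrix (Fin q × Fin m) (Fin q × Fin m) ℝ) :
    Matrix (Fin q) (Fin q) ℝ :=
  Matrix.of fun i j => ∑ k : Fin m, M (i, k) (j, k)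

/-- Blockwise application of a map `Φ : M_p → M_q` to an `n × n` block matrix. -/
noncomputable def blockMap (p q n : ℕ)
    (Φ : Matrix (Fin p) (Fin p) ℝ → Matrix (Fin q) (Fin q) ℝ)
    (M : Matrix (Fin n × Fin p) (Fin n × Fin p) ℝ) :
    Matrix (Fin n × Fin q) (Fin n × Fin q) ℝ :=
  Matrix.of fun a b => Φ (Matrix.of fun i j => M (a.1, i) (b.1, j)) a.2 b.2

/-- Complete positivity of `Φ : M_p → M_q`. -/
def IsCompletelyPositive (p q : ℕ)
    (Φ : Matrix (Fin p) (Fin p) ℝ → Matrix (Fin q) (Fin q) ℝ) : Prop :=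
  ∀ n : ℕ, ∀ M : Matrix (Fin n × Fin p) (Fin n × Fin p) ℝ,
    M.PosSemidef → (blockMap p q n Φ M).PosSemidef

lemma partial_psd {ι κ : Type*} [Fintype ι] [Fintype κ] [DecidableEq ι] [DecidableEq κ]
    (N : Matrix (ι × κ) (ι × κ) ℝ) (hN : N.PosSemidef) :
    (Matrix.of fun i j => ∑ k, N (i,k) (j,k) : Matrix ι ι ℝ).PosSemidef := by
  have h : (Matrix.of fun i j => ∑ k, N (i,k) (j,k) : Matrix ι ι ℝ)
      = ∑ k : κ, (Matrix.of fun (i : ι) (w : ι × κ) => if w = (i,k) then (1:ℝ) else 0) * N *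
          (Matrix.of fun (i : ι) (w : ι × κ) => if w = (i,k) then (1:ℝ) else 0)ᴴ := by
    ext i j
    rw [Matrix.sum_apply]
    apply Finset.sum_congr rfl
    intro k _
    simp [Matrix.mul_apply, conjTranspose_apply, Finset.sum_ite_eq']
  rw [h]
  exact Finset.sum_induction _ _ (fun a b ha hb => ha.add hb) .zero
    (fun k _ => hN.mul_mul_conjTranspose_same _)

lemma rev_dir (p q : ℕ)
    (Φ : Matrix (Fin p) (Fin p) ℝ → Matrix (Fin q) (Fin q) ℝ)
    (m : ℕ) (A : Matrix (Fin q × Fin m) (Fin p) ℝ)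
    (hA : ∀ X, Φ X = partialTrace q m (A * X * Aᵀ))
    (n : ℕ) (M : Matrix (Fin n × Fin p) (Fin n × Fin p) ℝ) (hM : M.PosSemidef) :
    (blockMap p q n Φ M).PosSemidef := by
  set Abig : Matrix ((Fin n × Fin q) × Fin m) (Fin n × Fin p) ℝ :=
    Matrix.of fun xk yj => if xk.1.1 = yj.1 then A (xk.1.2, xk.2) yj.2 else 0 with hAbig
  have hN : (Abig * M * Abigᴴ).PosSemidef := hM.mul_mul_conjTranspose_same Abig
  have key : blockMap p q n Φ M
      = Matrix.of fun u v => ∑ k, (Abig * M * Abigᴴ) (u,k) (v,k) := by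
    ext ⟨x,a⟩ ⟨y,b⟩
    show Φ (Matrix.of fun i j => M (x, i) (y, j)) a b = _
    rw [hA]
    show ∑ k : Fin m, (A * (Matrix.of fun i j => M (x, i) (y, j)) * Aᵀ) ((a,k)) ((b,k)) = _
    simp only [Matrix.of_apply]
    apply Finset.sum_congr rfl
    intro k _
    simp only [Matrix.mul_apply, conjTranspose_apply, transpose_apply, star_trivial, hAbig,
      Matrix.of_apply, Fintype.sum_prod_type]
    rw [Finset.sum_comm]
    simp [Finset.sum_ite_eq, Finset.mul_sum, Finset.sum_mul]
  rw [key]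
  exact partial_psd _ hN

lemma fwd_dir (p q : ℕ)
    (Φ : Matrix (Fin p) (Fin p) ℝ → Matrix (Fin q) (Fin q) ℝ)
    (hΦ : IsLinearMap ℝ Φ) (hCP : IsCompletelyPositive p q Φ) :
    ∃ m : ℕ, ∃ A : Matrix (Fin q × Fin m) (Fin p) ℝ,
      ∀ X, Φ X = partialTrace q m (A * X * Aᵀ) := by
  classical
  set M0 : Matrix (Fin p × Fin p) (Fin p × Fin p) ℝ :=
    Matrix.of fun x y => (if x.1 = x.2 then (1:ℝ) else 0) * (if y.1 = y.2 then (1:ℝ) else 0)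
    with hM0def
  have hM0 : M0.PosSemidef := by
    rw [posSemidef_iff_dotProduct_mulVec]
    constructor
    · ext x y
      simp only [hM0def, conjTranspose_apply, Matrix.of_apply, star_trivial]
      ring
    · intro v
      have : star v ⬝ᵥ M0 *ᵥ v
          = (∑ x, (if x.1 = x.2 then (1:ℝ) else 0) * v x)
            * (∑ y, (if y.1 = y.2 then (1:ℝ) else 0) * v y) := by
        rw [Finset.sum_mul_sum]
        simp only [dotProduct, mulVec, star_trivial, hM0def, Matrix.of_apply, dotProduct,
          Finset.mul_sum]
        apply Finset.sum_congr rfl; intro x _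
        apply Finset.sum_congr rfl; intro y _
        ring
      rw [this]
      exact mul_self_nonneg _
  have hC : (blockMap p q p Φ M0).PosSemidef := hCP p M0 hM0
  obtain ⟨B, hB⟩ : ∃ B : Matrix (Fin p × Fin q) (Fin p × Fin q) ℝ, blockMap p q p Φ M0 = Bᴴ * B := by
    open scoped MatrixOrder Matrix.Norms.L2Operator in
    exact CStarAlgebra.nonneg_iff_eq_star_mul_self.mp hC.nonneg
  have hEntry : ∀ (x y : Fin p) (a b : Fin q),
      Φ (single x y 1) a b = ∑ r, B r (x,a) * B r (y,b) := by
    intro x y a b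
    have h1 : blockMap p q p Φ M0 ((x,a)) ((y,b)) = Φ (single x y 1) a b := by
      show Φ (Matrix.of fun i j => M0 ((x,i)) ((y,j))) a b = _
      congr 1
      ext i j
      by_cases hxi : x = i <;> by_cases hyj : y = j <;>
        simp [hM0def, single, hxi, hyj]
    rw [← h1, hB]
    simp [Matrix.mul_apply, conjTranspose_apply]
  refine ⟨p * q, Matrix.of fun ar j => B (finProdFinEquiv.symm ar.2) (j, ar.1), fun X => ?_⟩
  ext a b
  have hsmul : ∀ x y : Fin p, single x y (X x y) = X x y • single x y (1:ℝ) := by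
    intro x y; rw [smul_single, smul_eq_mul, mul_one]
  have hL : Φ X a b = ∑ x, ∑ y, X x y * Φ (single x y 1) a b := by
    conv_lhs => rw [matrix_eq_sum_single X]
    have hsum : Φ (∑ x, ∑ y, single x y (X x y))
        = ∑ x, ∑ y, Φ (single x y (X x y)) := by
      show (IsLinearMap.mk' Φ hΦ) (∑ x, ∑ y, single x y (X x y)) = _
      rw [map_sum]
      exact Finset.sum_congr rfl fun x _ => map_sum _ _ _
    rw [hsum]
    rw [Matrix.sum_apply]
    apply Finset.sum_congr rfl; intro x _
    rw [Matrix.sum_apply]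
    apply Finset.sum_congr rfl; intro y _
    rw [hsmul x y, hΦ.map_smul]
    simp
  rw [hL]
  show _ = ∑ k : Fin (p*q), _
  simp only [Matrix.of_apply, Matrix.mul_apply, transpose_apply]
  rw [← Equiv.sum_comp (finProdFinEquiv : Fin p × Fin q ≃ Fin (p*q))]
  simp only [Equiv.symm_apply_apply]
  simp_rw [hEntry, Finset.mul_sum]
  have swap1 : ∀ (f : Fin p → Fin p → Fin p × Fin q → ℝ),
      ∑ x, ∑ y, ∑ r, f x y r = ∑ r, ∑ y, ∑ x, f x y r := by
    intro f
    have h1 : ∀ x : Fin p, ∑ y, ∑ r, f x y r = ∑ r, ∑ y, f x y r :=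
      fun x => Finset.sum_comm
    simp_rw [h1]
    rw [Finset.sum_comm]
    exact Finset.sum_congr rfl fun r _ => Finset.sum_comm
  rw [swap1 (fun x y r => X x y * (B r (x,a) * B r (y,b)))]
  apply Finset.sum_congr rfl; intro r _
  apply Finset.sum_congr rfl; intro y _
  rw [Finset.sum_mul]
  apply Finset.sum_congr rfl; intro x _
  ring

/-- (Stinespring representation theorem.)  A linear map `Φ : M_p → M_q` is completely
positive iff there exist `m ∈ ℕ` and `A ∈ M_{qm×p}` with `Φ(X) = tr_m(A X Aᵀ)`. -/
theorem stinespring_representation (p q : ℕ)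
    (Φ : Matrix (Fin p) (Fin p) ℝ → Matrix (Fin q) (Fin q) ℝ)
    (hΦ : IsLinearMap ℝ Φ) :
    IsCompletelyPositive p q Φ ↔
      ∃ m : ℕ, ∃ A : Matrix (Fin q × Fin m) (Fin p) ℝ,
        ∀ X, Φ X = partialTrace q m (A * X * Aᵀ) := by
  constructor
  · exact fun hCP => fwd_dir p q Φ hΦ hCP
  · rintro ⟨m, A, hA⟩ n M hM
    exact rev_dir p q Φ m A hA n M hM
end

section
/- (Kraus representation theorem) If Φ : M_p → M_q is a completely positive linear map, then there exist r ≤ pq and matrices A_1, ..., A_r ∈ M_{q×p} such that Φ(X) = Σ_{j=1}^r A_j X A_j^T for all X ∈ M_p. -/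
open Matrix

/-- (Kraus representation theorem.)  If `Φ : M_p → M_q` is a completely positive
linear map, then there exist `r ≤ pq` and `A_1, …, A_r ∈ M_{q×p}` such that
`Φ(X) = Σ_{j=1}^r A_j X A_jᵀ` for all `X`. -/
theorem kraus_representation (p q : ℕ)
    (Φ : Matrix (Fin p) (Fin p) ℝ → Matrix (Fin q) (Fin q) ℝ)
    (hΦ : IsLinearMap ℝ Φ) (hcp : IsCompletelyPositive p q Φ) :
    ∃ r : ℕ, r ≤ p * q ∧ ∃ A : Fin r → Matrix (Fin q) (Fin p) ℝ,
      ∀ X, Φ X = ∑ j : Fin r, A j * X * (A j)ᵀ := by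
  classical
  set v : Fin p × Fin p → ℝ := fun a => if a.1 = a.2 then 1 else 0 with hv
  set M : Matrix (Fin p × Fin p) (Fin p × Fin p) ℝ := vecMulVec v v with hMdef
  have hM : M.PosSemidef := by
    have h1 : M = replicateCol Unit v * (replicateCol Unit v)ᴴ := by
      rw [hMdef, vecMulVec_eq Unit, conjTranspose_replicateCol, star_trivial]
    rw [h1]
    exact posSemidef_self_mul_conjTranspose _
  have hC : (blockMap p q p Φ M).PosSemidef := hcp p M hM
  open scoped MatrixOrder in
  obtain ⟨B, hB⟩ := CStarAlgebra.nonneg_iff_eq_star_mul_self.mp hC.nonneg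
  set A : Fin (p * q) → Matrix (Fin q) (Fin p) ℝ :=
    fun j => Matrix.of fun k i => B (finProdFinEquiv.symm j) (i, k) with hA
  refine ⟨p * q, le_refl _, A, ?_⟩
  intro X
  have key : ∀ (i j : Fin p) (k l : Fin q),
      Φ (single i j 1) k l = ∑ m : Fin p × Fin q, B m (i, k) * B m (j, l) := by
    intro i j k l
    have h1 : blockMap p q p Φ M (i, k) (j, l) = Φ (single i j 1) k l := by
      simp only [blockMap, of_apply]
      congr 2
      ext a b
      by_cases h1 : i = a <;> by_cases h2 : j = b <;>
        simp [hMdef, vecMulVec_apply, single, hv, h1, h2]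
    rw [← h1, hB]
    simp [mul_apply, conjTranspose_apply]
  -- express Φ X via linearity
  have hΦX : ∀ (k : Fin q) (l : Fin q),
      Φ X k l = ∑ i : Fin p, ∑ j : Fin p, X i j * Φ (single i j 1) k l := by
    intro k l
    have hX : X = ∑ i : Fin p, ∑ j : Fin p, X i j • single i j (1 : ℝ) := by
      conv_lhs => rw [matrix_eq_sum_single X]
      refine Finset.sum_congr rfl fun i _ => Finset.sum_congr rfl fun j _ => ?_
      rw [smul_single, smul_eq_mul, mul_one]
    have h2 : Φ X = ∑ i : Fin p, ∑ j : Fin p, X i j • Φ (single i j 1) := by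
      conv_lhs => rw [hX]
      have h3 := map_sum (hΦ.mk' Φ)
        (fun i => ∑ j : Fin p, X i j • single i j (1 : ℝ)) Finset.univ
      simp only [IsLinearMap.mk'_apply] at h3
      rw [h3]
      refine Finset.sum_congr rfl fun i _ => ?_
      have h4 := map_sum (hΦ.mk' Φ)
        (fun j => X i j • single i j (1 : ℝ)) Finset.univ
      simp only [IsLinearMap.mk'_apply] at h4
      rw [h4]
      refine Finset.sum_congr rfl fun j _ => ?_
      have h5 := (hΦ.mk' Φ).map_smul (X i j) (single i j (1 : ℝ))
      simpa using h5
    rw [h2]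
    simp [Matrix.sum_apply]
  ext k l
  rw [hΦX k l, Matrix.sum_apply]
  have hsum : ∑ j' : Fin (p * q), (A j' * X * (A j')ᵀ) k l
      = ∑ m : Fin p × Fin q, ∑ i : Fin p, ∑ j : Fin p,
          B m (i, k) * X i j * B m (j, l) := by
    refine (Fintype.sum_equiv finProdFinEquiv _ _ fun m => ?_).symm
    simp only [hA, mul_apply, transpose_apply, of_apply, Equiv.symm_apply_apply,
      Finset.sum_mul]
    exact Finset.sum_comm
  rw [hsum]
  simp only [key, Finset.mul_sum]
  conv_lhs => enter [2, i]; rw [Finset.sum_comm]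
  rw [Finset.sum_comm]
  refine Finset.sum_congr rfl fun m _ => Finset.sum_congr rfl fun i _ =>
    Finset.sum_congr rfl fun j _ => ?_
  ring
end

section
/- (Choi's theorem) A linear map Φ : M_p → M_q is completely positive if and only if the Choi block matrix M ∈ M_p(M_q), defined by M_{ij} = Φ(E_{ij}) for 1 ≤ i,j ≤ p, is positive semidefinite, where E_{ij} are the matrix units of M_p. -/
open Matrix

/-- The Choi matrix of `Φ : M_p → M_q`: the `pq × pq` block matrix whose `(i,j)`
block is `Φ(E_{ij})`, `E_{ij}` being the matrix units of `M_p`. -/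
noncomputable def choiMatrix (p q : ℕ)
    (Φ : Matrix (Fin p) (Fin p) ℝ → Matrix (Fin q) (Fin q) ℝ) :
    Matrix (Fin p × Fin q) (Fin p × Fin q) ℝ :=
  Matrix.of fun a b => Φ (Matrix.single a.1 b.1 1) a.2 b.2

private lemma psd_sum {m : Type*} [Fintype m] {ι : Type*} (s : Finset ι)
    (f : ι → Matrix m m ℝ) (h : ∀ i ∈ s, (f i).PosSemidef) :
    (∑ i ∈ s, f i).PosSemidef :=
  Finset.sum_induction f _ (fun _ _ ha hb => ha.add hb) Matrix.PosSemidef.zero h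

private lemma phi_entry {p q : ℕ}
    {Φ : Matrix (Fin p) (Fin p) ℝ → Matrix (Fin q) (Fin q) ℝ}
    (hΦ : IsLinearMap ℝ Φ) (A : Matrix (Fin p) (Fin p) ℝ) (s t : Fin q) :
    Φ A s t = ∑ i, ∑ j, A i j * Φ (Matrix.single i j 1) s t := by
  let L := IsLinearMap.mk' Φ hΦ
  have hL : Φ = ⇑L := rfl
  have : Φ A = ∑ i, ∑ j, A i j • Φ (Matrix.single i j 1) := by
    conv_lhs => rw [Matrix.matrix_eq_sum_single A]
    rw [hL, map_sum]
    refine Finset.sum_congr rfl fun i _ => ?_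
    rw [map_sum]
    refine Finset.sum_congr rfl fun j _ => ?_
    rw [show Matrix.single i j (A i j) = A i j • Matrix.single i j 1 by
      rw [Matrix.smul_single, smul_eq_mul, mul_one], L.map_smul]
  rw [this]
  simp [Matrix.sum_apply]

/-- (Choi's theorem.)  A linear map `Φ : M_p → M_q` is completely positive iff its
Choi matrix `[Φ(E_{ij})]_{ij}` is positive semidefinite. -/
theorem choi_theorem (p q : ℕ)
    (Φ : Matrix (Fin p) (Fin p) ℝ → Matrix (Fin q) (Fin q) ℝ)
    (hΦ : IsLinearMap ℝ Φ) :
    IsCompletelyPositive p q Φ ↔ (choiMatrix p q Φ).PosSemidef := by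
  constructor
  · intro h
    -- apply complete positivity to the PSD matrix `M₀ (a,i) (b,j) = δ_{a i} δ_{b j}`
    set A : Matrix Unit (Fin p × Fin p) ℝ :=
      Matrix.of fun _ u => if u.1 = u.2 then (1:ℝ) else 0 with hA
    have hpsd : (Aᴴ * A).PosSemidef := Matrix.posSemidef_conjTranspose_mul_self A
    have := h p (Aᴴ * A) hpsd
    convert this using 1
    ext ⟨a, s⟩ ⟨b, t⟩
    simp only [choiMatrix, blockMap, Matrix.of_apply]
    congr 1
    ext i j
    simp [hA, Matrix.mul_apply, Matrix.single, ite_and, eq_comm, mul_ite]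
    split_ifs <;> rfl
  · intro hC n M hM
    obtain ⟨B, hB⟩ : ∃ B : Matrix (Fin n × Fin p) (Fin n × Fin p) ℝ, M = Bᴴ * B := by
      open scoped MatrixOrder in
      obtain ⟨B, hB⟩ := CStarAlgebra.nonneg_iff_eq_star_mul_self.mp hM.nonneg
      exact ⟨B, hB⟩
    set C := choiMatrix p q Φ with hCdef
    set V : (Fin n × Fin p) → Matrix (Fin n × Fin q) (Fin p × Fin q) ℝ :=
      fun k => Matrix.of fun a u => B k (a.1, u.1) * (if a.2 = u.2 then 1 else 0) with hV
    have key : blockMap p q n Φ M = ∑ k, V k * C * (V k)ᴴ := by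
      ext ⟨a, s⟩ ⟨b, t⟩
      have hMentry : ∀ i j, M (a, i) (b, j) = ∑ k, B k (a, i) * B k (b, j) := by
        intro i j
        rw [hB]
        simp [Matrix.mul_apply, Matrix.conjTranspose_apply]
      have lhs_eq : blockMap p q n Φ M (a, s) (b, t)
          = ∑ i, ∑ j, (∑ k, B k (a, i) * B k (b, j)) * C (i, s) (j, t) := by
        simp only [blockMap, Matrix.of_apply]
        rw [phi_entry hΦ]
        exact Finset.sum_congr rfl fun i _ => Finset.sum_congr rfl fun j _ => by
          rw [Matrix.of_apply, hMentry i j]; rfl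
      have rhs_eq : (∑ k, V k * C * (V k)ᴴ) ((a, s) : Fin n × Fin q) (b, t)
          = ∑ k, ∑ i, ∑ j, (B k (a, i) * B k (b, j)) * C (i, s) (j, t) := by
        rw [Matrix.sum_apply]
        refine Finset.sum_congr rfl fun k _ => ?_
        simp only [Matrix.mul_apply, Matrix.conjTranspose_apply, hV, Matrix.of_apply,
          star_trivial, Fintype.sum_prod_type, mul_ite, ite_mul, one_mul, mul_one,
          zero_mul, mul_zero, Finset.sum_ite_eq, Finset.sum_ite_eq', Finset.mem_univ,
          if_true, Finset.sum_mul, Finset.mul_sum]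
        rw [Finset.sum_comm]
        refine Finset.sum_congr rfl fun i _ => Finset.sum_congr rfl fun j _ => by ring
      rw [lhs_eq, rhs_eq]
      simp only [Finset.sum_mul]
      exact (Finset.sum_congr rfl fun i _ => Finset.sum_comm).trans Finset.sum_comm
    rw [key]
    exact psd_sum _ _ fun k _ => hC.mul_mul_conjTranspose_same (V k)
end
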